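/- Let σ = {B_1,…,B_k} be a set partition of [n] with blocks listed in increasing order of their minimal elements, and let i be an integer with 2 ≤ i ≤ n. If B_p ∩ [i,n] ≠ ∅ for every 1 ≤ p ≤ k and min(B_1 ∩ [i,n]) < min(B_2 ∩ [i,n]) < … < min(B_k ∩ [i,n]), then σ = σ_{[i-1]} ∘ (σ_{[i,n]} − i + 1); in particular σ is splitable. -/

import Mathlib

/-- A block of a set partition: a finite set of positive integers. -/
abbrev Block : Type := Finset ℕ

/-- The underlying set of a list of blocks (the union of all blocks). -/
def support (P : List Block) : Finset ℕ := P.foldr (· ∪ ·) ∅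

/-- `P` is a set partition of `[n] = {1,…,n}`: a list of pairwise disjoint nonempty
blocks with union `{1,…,n}`, listed in increasing order of their minimal elements. -/
def IsPartition (n : ℕ) (P : List Block) : Prop :=
  (∀ B ∈ P, B.Nonempty) ∧ List.Pairwise Disjoint P ∧
    support P = Finset.Icc 1 n ∧
    List.Chain' (fun B C : Block => B.min < C.min) P

/-- Add `m` to every element of every block: `σ + m`. -/
def shiftUp (m : ℕ) (P : List Block) : List Block := P.map fun B => B.image (· + m)

/-- Subtract `m` from every element of every block. -/
def shiftDown (m : ℕ) (P : List Block) : List Block := P.map fun B => B.image (· - m)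

/-- The slash product `π | σ` where `π` is a partition of `[m]`. -/
def slash (m : ℕ) (P Q : List Block) : List Block := P ++ shiftUp m Q

/-- `P` is an atomic partition of `[n]`: it is not a slash product of two
nonempty partitions. -/
def Atomic (n : ℕ) (P : List Block) : Prop :=
  ¬ ∃ (a b : ℕ) (σ τ : List Block), 0 < a ∧ 0 < b ∧ a + b = n ∧
      IsPartition a σ ∧ IsPartition b τ ∧ P = slash a σ τ

/-- The split product `π ∘ σ` where `π` is a partition of `[m]`. -/
def splitProd (m : ℕ) (P Q : List Block) : List Block :=
  List.zipWith (· ∪ ·) P (shiftUp m Q) ++ P.drop Q.length ++ (shiftUp m Q).drop P.length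

/-- `P` is a splitable partition of `[n]`: a split product of two nonempty partitions. -/
def Splitable (n : ℕ) (P : List Block) : Prop :=
  ∃ (a b : ℕ) (σ τ : List Block), 0 < a ∧ 0 < b ∧ a + b = n ∧
      IsPartition a σ ∧ IsPartition b τ ∧ P = splitProd a σ τ

/-- The minimum of a block (`0` for the empty block). -/
def blockMin (B : Block) : ℕ := B.min.untopD 0

/-- The restriction `π_S`: the nonempty intersections `B ∩ S`, listed in
increasing order of their minimal elements. -/
def restrict (P : List Block) (S : Finset ℕ) : List Block :=
  (((P.map (· ∩ S)).filter fun B => decide B.Nonempty).mergeSort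
    fun B C => decide (blockMin B ≤ blockMin C))

/-- The blocks from position `d` on have union equal to an upper part
`{x_t, x_{t+1}, …, x_n}` of the underlying set. -/
def IsUpperSuffix (P : List Block) (d : ℕ) : Prop :=
  ∃ s ∈ support P, support (P.drop d) = (support P).filter (s ≤ ·)

instance (P : List Block) : DecidablePred (IsUpperSuffix P) := fun d => by
  unfold IsUpperSuffix; infer_instance

/-- `R(π)`: the longest proper-or-improper final segment `{B_r,…,B_k}` of the blocks
whose union is an upper part `{x_t,…,x_n}` of the underlying set. -/
def Rmap (P : List Block) : List Block :=
  P.drop ((((Finset.range P.length).filter fun d => IsUpperSuffix P d).max).unbotD 0)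

/-- `π = π_{[i-1]} ∘ (π_{[i,n]} − i + 1)`. -/
def SplitsAt (n i : ℕ) (P : List Block) : Prop :=
  P = splitProd (i - 1) (restrict P (Finset.Icc 1 (i - 1)))
        (shiftDown (i - 1) (restrict P (Finset.Icc i n)))

instance (n : ℕ) (P : List Block) : DecidablePred fun i => SplitsAt n i P := fun i => by
  unfold SplitsAt; infer_instance

/-- The index `i` in the definition of `φ`: the smallest element of the first block
`B_1` such that `π = π_{[i-1]} ∘ (π_{[i,n]} − i + 1)`. -/
def phiI (n : ℕ) (P : List Block) : ℕ :=
  (((P.headD ∅).filter fun i => 2 ≤ i ∧ SplitsAt n i P).min).untopD 0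

/-- The index `j` in the definition of `φ`: the smallest element of the underlying
set of `R(π_{[i,n]})`. -/
def phiJ (n : ℕ) (P : List Block) : ℕ :=
  ((support (Rmap (restrict P (Finset.Icc (phiI n P) n)))).min).untopD 0

/-- The map `φ`: `φ(π) = π_{[j-1]} | (π_{[j,n]} − j + 1)`. -/
def phi (n : ℕ) (P : List Block) : List Block :=
  slash (phiJ n P - 1) (restrict P (Finset.Icc 1 (phiJ n P - 1)))
    (shiftDown (phiJ n P - 1) (restrict P (Finset.Icc (phiJ n P) n)))

/-- `σ_{[j-1]} = σ_{[i-1]} ∘ (σ_{[i,j-1]} − i + 1)`. -/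
def SplitsAtRes (j i : ℕ) (P : List Block) : Prop :=
  restrict P (Finset.Icc 1 (j - 1)) =
    splitProd (i - 1) (restrict P (Finset.Icc 1 (i - 1)))
      (shiftDown (i - 1) (restrict P (Finset.Icc i (j - 1))))

instance (j : ℕ) (P : List Block) : DecidablePred fun i => SplitsAtRes j i P := fun i => by
  unfold SplitsAtRes; infer_instance

open scoped Classical in
/-- The map `ψ`. Here `j` is the smallest element of the underlying set of `R(σ)`,
`r` is the (0-based) position of the first block of `R(σ)`, and in the splitable case
`i` is the smallest element of `B_1` with `σ_{[j-1]} = σ_{[i-1]} ∘ (σ_{[i,j-1]} − i + 1)`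
and `q` is the (0-based) position of the first block contained in `[i-1]`. -/
noncomputable def psi (n : ℕ) (P : List Block) : List Block :=
  let j := ((support (Rmap P)).min).untopD 0
  if Splitable (j - 1) (restrict P (Finset.Icc 1 (j - 1))) then
    let i := (((P.headD ∅).filter fun i => 2 ≤ i ∧ SplitsAtRes j i P).min).untopD 0
    let q := P.findIdx fun B => decide (B ⊆ Finset.Icc 1 (i - 1))
    let r := P.length - (Rmap P).length
    P.take q ++ (List.zipWith (· ∪ ·) ((P.drop q).take (r - q)) (P.drop r)
      ++ ((P.drop q).take (r - q)).drop (P.drop r).length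
      ++ (P.drop r).drop (r - q))
  else
    splitProd (j - 1) (restrict P (Finset.Icc 1 (j - 1)))
      (shiftDown (j - 1) (restrict P (Finset.Icc j n)))

lemma mem_support {P : List Block} {x : ℕ} : x ∈ support P ↔ ∃ B ∈ P, x ∈ B := by
  induction P with
  | nil => simp [support]
  | cons B Q ih =>
    simp only [support, List.foldr_cons, Finset.mem_union, List.mem_cons]
    rw [show Q.foldr (· ∪ ·) ∅ = support Q from rfl, ih]
    constructor
    · rintro (h | ⟨C, hC, hx⟩)
      · exact ⟨B, Or.inl rfl, h⟩
      · exact ⟨C, Or.inr hC, hx⟩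
    · rintro ⟨C, (rfl | hC), hx⟩
      · exact Or.inl hx
      · exact Or.inr ⟨C, hC, hx⟩

lemma blockMin_coe {B : Block} (h : B.Nonempty) : B.min = (blockMin B : WithTop ℕ) := by
  obtain ⟨a, ha⟩ := Finset.min_of_nonempty h
  rw [ha]
  simp [blockMin, ha]
  rfl

lemma blockMin_mem {B : Block} (h : B.Nonempty) : blockMin B ∈ B :=
  Finset.mem_of_min (blockMin_coe h)

lemma blockMin_le {B : Block} {x : ℕ} (h : B.Nonempty) (hx : x ∈ B) : blockMin B ≤ x := by
  have := Finset.min_le hx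
  rw [blockMin_coe h] at this
  exact WithTop.coe_le_coe.mp this

lemma blockMin_lt_blockMin {B C : Block} (hB : B.Nonempty) (hC : C.Nonempty)
    (h : B.min < C.min) : blockMin B < blockMin C := by
  rw [blockMin_coe hB, blockMin_coe hC] at h
  exact WithTop.coe_lt_coe.mp h

lemma mergeSort_eq_self {L : List Block}
    (h : List.Pairwise (fun B C => blockMin B ≤ blockMin C) L) :
    L.mergeSort (fun B C => decide (blockMin B ≤ blockMin C)) = L :=
  List.mergeSort_of_pairwise (by simpa using h)

lemma split_lemma (i : ℕ) (P : List Block) (h1 : ∀ B ∈ P, B.Nonempty)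
    (h2 : ∀ B ∈ P, ∀ x ∈ B, 1 ≤ x)
    (h3 : List.Pairwise (fun B C : Block => B.min < C.min) P) :
    ∃ P₁ P₂ : List Block, P = P₁ ++ P₂ ∧
      (∀ B ∈ P₁, (B ∩ Finset.Icc 1 (i-1)).Nonempty) ∧
      (∀ B ∈ P₂, B ∩ Finset.Icc 1 (i-1) = ∅) := by
  induction P with
  | nil => exact ⟨[], [], rfl, by simp, by simp⟩
  | cons B Q ih =>
    rw [List.pairwise_cons] at h3
    by_cases hB : (B ∩ Finset.Icc 1 (i-1)).Nonempty
    · obtain ⟨P₁, P₂, hPQ, hP₁, hP₂⟩ := ih (fun C hC => h1 C (.tail _ hC))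
        (fun C hC => h2 C (.tail _ hC)) h3.2
      refine ⟨B :: P₁, P₂, by simp [hPQ], ?_, hP₂⟩
      intro C hC
      rcases List.mem_cons.mp hC with rfl | hC
      · exact hB
      · exact hP₁ C hC
    · have hBe : B ∩ Finset.Icc 1 (i-1) = ∅ := Finset.not_nonempty_iff_eq_empty.mp hB
      refine ⟨[], B :: Q, rfl, by simp, ?_⟩
      have hBne := h1 B (.head _)
      have hbmem := blockMin_mem hBne
      have hbi : i ≤ blockMin B := by
        have h0 : blockMin B ∉ B ∩ Finset.Icc 1 (i-1) := by rw [hBe]; simp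
        have h1b := h2 B (.head _) _ hbmem
        simp only [Finset.mem_inter, Finset.mem_Icc, hbmem, true_and, not_and, not_le] at h0
        omega
      intro C hC0
      rcases List.mem_cons.mp hC0 with rfl | hC
      · exact hBe
      · have hCne := h1 C (.tail _ hC)
        have hlt := blockMin_lt_blockMin hBne hCne (h3.1 C hC)
        rw [Finset.eq_empty_iff_forall_notMem]
        intro x hx
        simp only [Finset.mem_inter, Finset.mem_Icc] at hx
        have := blockMin_le hCne hx.1
        omega

lemma zip_union {S T : Finset ℕ} : ∀ (P₁ L : List Block),
    (∀ B ∈ P₁, (B ∩ S) ∪ (B ∩ T) = B) →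
    List.zipWith (· ∪ ·) (P₁.map (· ∩ S)) (P₁.map (· ∩ T) ++ L) = P₁ := by
  intro P₁
  induction P₁ with
  | nil => simp
  | cons B Q ih =>
    intro L h
    simp only [List.map_cons, List.cons_append, List.zipWith_cons_cons]
    rw [h B (.head _), ih L (fun C hC => h C (.tail _ hC))]

lemma min_image_sub {B : Block} {m : ℕ} (hB : B.Nonempty) (h : ∀ x ∈ B, m + 1 ≤ x) :
    (B.image (· - m)).min = ((blockMin B - m : ℕ) : WithTop ℕ) := by
  apply le_antisymm
  · exact Finset.min_le (Finset.mem_image.mpr ⟨blockMin B, blockMin_mem hB, rfl⟩)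
  · apply Finset.le_min
    intro a ha
    obtain ⟨x, hx, rfl⟩ := Finset.mem_image.mp ha
    have h1 := blockMin_le hB hx
    have h2 := h x hx
    exact WithTop.coe_le_coe.mpr (Nat.sub_le_sub_right h1 m)

/-- Let `σ = {B_1,…,B_k}` be a set partition of `[n]` and `2 ≤ i ≤ n`.
If `B_p ∩ [i,n] ≠ ∅` for every `p` and
`min (B_1 ∩ [i,n]) < min (B_2 ∩ [i,n]) < ⋯ < min (B_k ∩ [i,n])`, then
`σ = σ_{[i-1]} ∘ (σ_{[i,n]} − i + 1)`; in particular `σ` is splitable. -/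
theorem splitsAt_of_increasing_minima (n : ℕ) (P : List Block) (hP : IsPartition n P)
    (i : ℕ) (hi2 : 2 ≤ i) (hin : i ≤ n)
    (hne : ∀ B ∈ P, (B ∩ Finset.Icc i n).Nonempty)
    (hmono : List.Chain'
      (fun B C : Block => (B ∩ Finset.Icc i n).min < (C ∩ Finset.Icc i n).min) P) :
    SplitsAt n i P ∧ Splitable n P := by
  unfold SplitsAt
  obtain ⟨hPne, hPdisj, hPsupp, hPchain⟩ := hP
  have hsub : ∀ B ∈ P, B ⊆ Finset.Icc 1 n := fun B hB x hx => by
    rw [← hPsupp]; exact mem_support.mpr ⟨B, hB, hx⟩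
  have hlow : ∀ B ∈ P, ∀ x ∈ B, 1 ≤ x := fun B hB x hx =>
    (Finset.mem_Icc.mp (hsub B hB hx)).1
  haveI i1 : IsTrans Block (fun B C : Block => B.min < C.min) := ⟨fun _ _ _ => lt_trans⟩
  haveI i2 : IsTrans Block
      (fun B C : Block => (B ∩ Finset.Icc i n).min < (C ∩ Finset.Icc i n).min) :=
    ⟨fun _ _ _ => lt_trans⟩
  have hpw : List.Pairwise (fun B C : Block => B.min < C.min) P :=
    List.isChain_iff_pairwise.mp hPchain
  have hpwg : List.Pairwise
      (fun B C : Block => (B ∩ Finset.Icc i n).min < (C ∩ Finset.Icc i n).min) P :=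
    List.isChain_iff_pairwise.mp hmono
  obtain ⟨P₁, P₂, hsplit, hP₁, hP₂⟩ := split_lemma i P hPne hlow hpw
  have hIcc : Finset.Icc 1 (i-1) ∪ Finset.Icc i n = Finset.Icc 1 n := by
    ext x; simp only [Finset.mem_union, Finset.mem_Icc]; omega
  have hunion : ∀ B ∈ P, (B ∩ Finset.Icc 1 (i-1)) ∪ (B ∩ Finset.Icc i n) = B := by
    intro B hB
    rw [← Finset.inter_union_distrib_left, hIcc]
    exact Finset.inter_eq_left.mpr (hsub B hB)
  -- membership in P₁ / P₂ implies membership in P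
  have hm1 : ∀ B ∈ P₁, B ∈ P := fun B hB => hsplit ▸ List.mem_append_left _ hB
  have hm2 : ∀ B ∈ P₂, B ∈ P := fun B hB => hsplit ▸ List.mem_append_right _ hB
  -- (A) restrict on upper interval
  have hrestHigh : restrict P (Finset.Icc i n) = P.map (· ∩ Finset.Icc i n) := by
    unfold restrict
    rw [List.filter_eq_self.mpr, mergeSort_eq_self]
    · rw [List.pairwise_map]
      refine hpwg.imp_of_mem ?_
      intro B C hB hC h
      exact le_of_lt (blockMin_lt_blockMin (hne B hB) (hne C hC) h)
    · intro b hb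
      obtain ⟨B, hB, rfl⟩ := List.mem_map.mp hb
      simpa using hne B hB
  -- min of lower part equals min of block
  have hminf : ∀ B ∈ P₁, (B ∩ Finset.Icc 1 (i-1)).min = B.min := by
    intro B hB
    have hBne := hPne B (hm1 B hB)
    have hfne := hP₁ B hB
    apply le_antisymm
    · obtain ⟨x₀, hx₀⟩ := hfne
      have hx₀' := Finset.mem_inter.mp hx₀
      have h1 : 1 ≤ blockMin B := hlow B (hm1 B hB) _ (blockMin_mem hBne)
      have h2 : blockMin B ≤ x₀ := blockMin_le hBne hx₀'.1
      have h3 := (Finset.mem_Icc.mp hx₀'.2).2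
      have hmem : blockMin B ∈ B ∩ Finset.Icc 1 (i-1) :=
        Finset.mem_inter.mpr ⟨blockMin_mem hBne, Finset.mem_Icc.mpr ⟨h1, by omega⟩⟩
      rw [blockMin_coe hBne]
      exact Finset.min_le hmem
    · exact Finset.le_min fun a ha => Finset.min_le (Finset.mem_inter.mp ha).1
  -- (B) restrict on lower interval
  have hpw1 : List.Pairwise (fun B C : Block => B.min < C.min) P₁ :=
    (List.pairwise_append.mp (hsplit ▸ hpw)).1
  have hrestLow : restrict P (Finset.Icc 1 (i-1)) = P₁.map (· ∩ Finset.Icc 1 (i-1)) := by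
    unfold restrict
    have hfil : (P.map (· ∩ Finset.Icc 1 (i-1))).filter (fun B => decide B.Nonempty)
        = P₁.map (· ∩ Finset.Icc 1 (i-1)) := by
      rw [hsplit, List.map_append, List.filter_append]
      rw [List.filter_eq_self.mpr, List.filter_eq_nil_iff.mpr, List.append_nil]
      · intro b hb
        obtain ⟨B, hB, rfl⟩ := List.mem_map.mp hb
        simp [hP₂ B hB]
      · intro b hb
        obtain ⟨B, hB, rfl⟩ := List.mem_map.mp hb
        simpa using hP₁ B hB
    rw [hfil, mergeSort_eq_self]
    rw [List.pairwise_map]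
    refine hpw1.imp_of_mem ?_
    intro B C hB hC h
    rw [← hminf B hB, ← hminf C hC] at h
    exact le_of_lt (blockMin_lt_blockMin (hP₁ B hB) (hP₁ C hC) h)
  -- (C) shiftUp ∘ shiftDown = id on upper parts
  have hshift : shiftUp (i-1) (shiftDown (i-1) (P.map (· ∩ Finset.Icc i n)))
      = P.map (· ∩ Finset.Icc i n) := by
    simp only [shiftUp, shiftDown, List.map_map]
    apply List.map_congr_left
    intro B _
    simp only [Function.comp]
    rw [Finset.image_image]
    have : ((B ∩ Finset.Icc i n).image ((· + (i-1)) ∘ (· - (i-1))))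
        = (B ∩ Finset.Icc i n).image id := by
      apply Finset.image_congr
      intro x hx
      simp only [Finset.coe_inter, Set.mem_inter_iff, Finset.mem_coe, Finset.mem_Icc] at hx
      simp only [Function.comp, id_eq]
      omega
    rw [this, Finset.image_id]
  -- lengths
  have hlen1 : P₁.length ≤ P.length := by rw [hsplit, List.length_append]; omega
  -- (D) the splitProd equation
  have hkey : P = splitProd (i - 1) (restrict P (Finset.Icc 1 (i - 1)))
      (shiftDown (i - 1) (restrict P (Finset.Icc i n))) := by
    rw [hrestLow, hrestHigh]
    unfold splitProd
    rw [hshift]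
    have hd1 : (P₁.map (· ∩ Finset.Icc 1 (i-1))).drop
        (shiftDown (i-1) (P.map (· ∩ Finset.Icc i n))).length = [] := by
      apply List.drop_eq_nil_of_le
      simp only [shiftDown, List.length_map, List.length_map]
      simpa using hlen1
    rw [hd1]
    have hmapg : P.map (· ∩ Finset.Icc i n)
        = P₁.map (· ∩ Finset.Icc i n) ++ P₂.map (· ∩ Finset.Icc i n) := by
      rw [hsplit, List.map_append]
    have hzip : List.zipWith (· ∪ ·) (P₁.map (· ∩ Finset.Icc 1 (i-1)))
        (P.map (· ∩ Finset.Icc i n)) = P₁ := by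
      rw [hmapg]
      exact zip_union P₁ _ (fun B hB => hunion B (hm1 B hB))
    have hdrop : (P.map (· ∩ Finset.Icc i n)).drop
        (P₁.map (· ∩ Finset.Icc 1 (i-1))).length = P₂ := by
      rw [hmapg, List.length_map, ← List.length_map (as := P₁) (· ∩ Finset.Icc i n),
        List.drop_left]
      apply List.map_congr_left ?_ |>.trans (List.map_id P₂)
      intro B hB
      have := hunion B (hm2 B hB)
      rw [hP₂ B hB, Finset.empty_union] at this
      exact this
    rw [hzip, hdrop, List.append_nil, ← hsplit]
  -- (E) the restriction to [1,i-1] is a partition of [i-1]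
  have hpart1 : IsPartition (i-1) (restrict P (Finset.Icc 1 (i-1))) := by
    rw [hrestLow]
    refine ⟨?_, ?_, ?_, ?_⟩
    · intro b hb
      obtain ⟨B, hB, rfl⟩ := List.mem_map.mp hb
      exact hP₁ B hB
    · rw [List.pairwise_map]
      exact ((List.pairwise_append.mp (hsplit ▸ hPdisj)).1).imp
        (fun h => h.mono Finset.inter_subset_left Finset.inter_subset_left)
    · ext x
      rw [mem_support]
      simp only [List.mem_map]
      constructor
      · rintro ⟨b, ⟨B, hB, rfl⟩, hx⟩
        exact (Finset.mem_inter.mp hx).2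
      · intro hx
        have hx' := Finset.mem_Icc.mp hx
        have hxn : x ∈ support P := by
          rw [hPsupp]; exact Finset.mem_Icc.mpr ⟨hx'.1, by omega⟩
        obtain ⟨B, hB, hxB⟩ := mem_support.mp hxn
        have hBmem : x ∈ B ∩ Finset.Icc 1 (i-1) := Finset.mem_inter.mpr ⟨hxB, hx⟩
        rw [hsplit, List.mem_append] at hB
        rcases hB with hB | hB
        · exact ⟨_, ⟨B, hB, rfl⟩, hBmem⟩
        · rw [hP₂ B hB] at hBmem; simp at hBmem
    · refine List.isChain_iff_pairwise.mpr ?_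
      rw [List.pairwise_map]
      refine hpw1.imp_of_mem ?_
      intro B C hB hC h
      rw [hminf B hB, hminf C hC]
      exact h
  -- (F) the shifted restriction to [i,n] is a partition of [n-(i-1)]
  have hpart2 : IsPartition (n - (i-1)) (shiftDown (i-1) (restrict P (Finset.Icc i n))) := by
    rw [hrestHigh]
    simp only [shiftDown, List.map_map]
    refine ⟨?_, ?_, ?_, ?_⟩
    · intro b hb
      obtain ⟨B, hB, rfl⟩ := List.mem_map.mp hb
      simp only [Function.comp]
      exact (hne B hB).image _
    · rw [List.pairwise_map]
      refine hPdisj.imp_of_mem ?_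
      intro B C hB hC h
      rw [Finset.disjoint_left]
      intro x hx1 hx2
      simp only [Function.comp, Finset.mem_image, Finset.mem_inter, Finset.mem_Icc] at hx1 hx2
      obtain ⟨b, ⟨hbB, hbi, hbn⟩, rfl⟩ := hx1
      obtain ⟨c, ⟨hcC, hci, hcn⟩, hbc⟩ := hx2
      have hbc' : b = c := by omega
      exact (Finset.disjoint_left.mp h hbB) (hbc' ▸ hcC)
    · ext x
      rw [mem_support]
      simp only [List.mem_map, Function.comp, Finset.mem_Icc]
      constructor
      · rintro ⟨b, ⟨B, hB, rfl⟩, hx⟩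
        simp only [Finset.mem_image, Finset.mem_inter, Finset.mem_Icc] at hx
        obtain ⟨y, ⟨hyB, hyi, hyn⟩, rfl⟩ := hx
        omega
      · intro hx
        have hyn : x + (i-1) ∈ support P := by
          rw [hPsupp]; exact Finset.mem_Icc.mpr ⟨by omega, by omega⟩
        obtain ⟨B, hB, hxB⟩ := mem_support.mp hyn
        refine ⟨_, ⟨B, hB, rfl⟩, ?_⟩
        simp only [Finset.mem_image, Finset.mem_inter, Finset.mem_Icc]
        exact ⟨x + (i-1), ⟨hxB, by omega, by omega⟩, by omega⟩
    · refine List.isChain_iff_pairwise.mpr ?_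
      rw [List.pairwise_map]
      refine hpwg.imp_of_mem ?_
      intro B C hB hC h
      simp only [Function.comp]
      have hBne' := hne B hB
      have hCne' := hne C hC
      have hiB : ∀ x ∈ B ∩ Finset.Icc i n, (i-1) + 1 ≤ x := fun x hx => by
        have := (Finset.mem_Icc.mp (Finset.mem_inter.mp hx).2).1; omega
      have hiC : ∀ x ∈ C ∩ Finset.Icc i n, (i-1) + 1 ≤ x := fun x hx => by
        have := (Finset.mem_Icc.mp (Finset.mem_inter.mp hx).2).1; omega
      rw [min_image_sub hBne' hiB, min_image_sub hCne' hiC]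
      have hlt := blockMin_lt_blockMin hBne' hCne' h
      have h2 : i ≤ blockMin (B ∩ Finset.Icc i n) :=
        (Finset.mem_Icc.mp (Finset.mem_inter.mp (blockMin_mem hBne')).2).1
      have h3 : blockMin (B ∩ Finset.Icc i n) - (i-1) < blockMin (C ∩ Finset.Icc i n) - (i-1) := by
        omega
      exact WithTop.coe_lt_coe.mpr h3
  exact ⟨hkey, ⟨i-1, n-(i-1), _, _, by omega, by omega, by omega, hpart1, hpart2, hkey⟩⟩
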